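/- arXiv:2209.06425 — 3 statements merged into one kernel-verified Lean document; each statement's English description precedes it below -/
import Mathlib

section
/- For any square matrices F₁, F₂, H₁, H₂, W of compatible dimensions and any complex number z with z not an eigenvalue of F₁ and z⁻¹ not an eigenvalue of F₂*, the identity [H₁(zI−F₁)⁻¹, I] · Ω(W) · [(z⁻¹I−F₂*)⁻¹H₂*; I] = 0 holds, where Ω(W) is the block matrix [[−W + F₁WF₂*, F₁WH₂*], [H₁WF₂*, H₁WH₂*]]. -/
set_option maxHeartbeats 1000000

open Matrix

theorem stmt_4 {n m r : ℕ} (F₁ F₂ W : Matrix (Fin n) (Fin n) ℂ)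
    (H₁ : Matrix (Fin m) (Fin n) ℂ) (H₂ : Matrix (Fin r) (Fin n) ℂ)
    (z : ℂ) (hz : z ≠ 0)
    (h1 : IsUnit (z • (1 : Matrix (Fin n) (Fin n) ℂ) - F₁))
    (h2 : IsUnit (z⁻¹ • (1 : Matrix (Fin n) (Fin n) ℂ) - F₂ᴴ)) :
    fromCols (H₁ * (z • (1 : Matrix (Fin n) (Fin n) ℂ) - F₁)⁻¹) (1 : Matrix (Fin m) (Fin m) ℂ) *
        fromBlocks (-W + F₁ * W * F₂ᴴ) (F₁ * W * H₂ᴴ) (H₁ * W * F₂ᴴ) (H₁ * W * H₂ᴴ) *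
        fromRows ((z⁻¹ • (1 : Matrix (Fin n) (Fin n) ℂ) - F₂ᴴ)⁻¹ * H₂ᴴ) (1 : Matrix (Fin r) (Fin r) ℂ) = (0 : Matrix (Fin m) (Fin r) ℂ) := by
  set M : Matrix (Fin n) (Fin n) ℂ := z • 1 - F₁ with hM
  set N : Matrix (Fin n) (Fin n) ℂ := z⁻¹ • 1 - F₂ᴴ with hN
  have hAM : M⁻¹ * M = 1 := nonsing_inv_mul M ((isUnit_iff_isUnit_det M).mp h1)
  have hNB : N * N⁻¹ = 1 := mul_nonsing_inv N ((isUnit_iff_isUnit_det N).mp h2)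
  have hF1 : F₁ = z • 1 - M := by simp [hM]
  have hF2 : F₂ᴴ = z⁻¹ • 1 - N := by simp [hN]
  rw [fromCols_mul_fromBlocks, fromCols_mul_fromRows]
  rw [hF1, hF2]
  have key : ∀ X Y : Matrix (Fin n) (Fin n) ℂ, M⁻¹ * (M * X * Y) = X * Y := by
    intro X Y
    rw [← Matrix.mul_assoc, ← Matrix.mul_assoc, hAM, Matrix.one_mul]
  simp only [Matrix.sub_mul, Matrix.mul_sub, Matrix.mul_add, Matrix.add_mul, Matrix.neg_mul,
    Matrix.mul_neg, Matrix.smul_mul, Matrix.mul_smul, Matrix.one_mul, Matrix.mul_one,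
    Matrix.mul_assoc, hAM, hNB, smul_smul, inv_mul_cancel₀ hz, mul_inv_cancel₀ hz, one_smul]
  have cM : ∀ X : Matrix (Fin n) (Fin n) ℂ, M⁻¹ * (M * X) = X := fun X => by
    rw [← Matrix.mul_assoc, hAM, Matrix.one_mul]
  have cN : ∀ X : Matrix (Fin n) (Fin r) ℂ, N * (N⁻¹ * X) = X := fun X => by
    rw [← Matrix.mul_assoc, hNB, Matrix.one_mul]
  have cMr : ∀ X : Matrix (Fin n) (Fin r) ℂ, M⁻¹ * (M * X) = X := fun X => by
    rw [← Matrix.mul_assoc, hAM, Matrix.one_mul]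
  simp only [cM, cMr, cN, smul_sub, smul_smul, inv_mul_cancel₀ hz, one_smul, Matrix.smul_mul,
    Matrix.sub_mul, Matrix.mul_sub, Matrix.mul_smul, Matrix.mul_assoc]
  abel
end

section
/- For a square matrix F, a matrix H, and a Hermitian matrix P, and any nonzero z ∈ ℂ with zI − F and z⁻¹I − F* invertible, [H(zI−F)⁻¹, I] · [[−P + FPF*, FPH*], [HPF*, HPH*]] · [(z⁻¹I−F*)⁻¹H*; I] = 0. -/
open Matrix

theorem stmt_5 {n m : ℕ} (F : Matrix (Fin n) (Fin n) ℂ)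
    (H : Matrix (Fin m) (Fin n) ℂ) (P : Matrix (Fin n) (Fin n) ℂ) (hP : Pᴴ = P)
    (z : ℂ) (hz : z ≠ 0)
    (h1 : IsUnit (z • (1 : Matrix (Fin n) (Fin n) ℂ) - F))
    (h2 : IsUnit (z⁻¹ • (1 : Matrix (Fin n) (Fin n) ℂ) - Fᴴ)) :
    Matrix.fromCols (H * (z • (1 : Matrix (Fin n) (Fin n) ℂ) - F)⁻¹) (1 : Matrix (Fin m) (Fin m) ℂ) *
        fromBlocks (-P + F * P * Fᴴ) (F * P * Hᴴ) (H * P * Fᴴ) (H * P * Hᴴ) *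
        fromRows ((z⁻¹ • (1 : Matrix (Fin n) (Fin n) ℂ) - Fᴴ)⁻¹ * Hᴴ) (1 : Matrix (Fin m) (Fin m) ℂ) = (0 : Matrix (Fin m) (Fin m) ℂ) := by
  set M1 := z • (1 : Matrix (Fin n) (Fin n) ℂ) - F with hM1
  set M2 := z⁻¹ • (1 : Matrix (Fin n) (Fin n) ℂ) - Fᴴ with hM2
  have hd1 : IsUnit M1.det := (isUnit_iff_isUnit_det _).mp h1
  have hd2 : IsUnit M2.det := (isUnit_iff_isUnit_det _).mp h2
  have hinv2 : M2 * M2⁻¹ = 1 := mul_nonsing_inv _ hd2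
  have hbr : (-P + F * P * Fᴴ) + F * P * M2 + M1 * P * Fᴴ + M1 * P * M2 = 0 := by
    rw [hM1, hM2]
    simp only [Matrix.sub_mul, Matrix.mul_sub, Matrix.smul_mul, Matrix.mul_smul,
      Matrix.one_mul, Matrix.mul_one, smul_smul, inv_mul_cancel₀ hz, mul_inv_cancel₀ hz,
      one_smul, smul_sub]
    abel
  have h3 : -P + F * P * Fᴴ = -(F * (P * M2)) - M1 * (P * Fᴴ) - M1 * (P * M2) := by
    rw [← sub_eq_zero, ← hbr]
    simp only [Matrix.mul_assoc]
    abel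
  have key : M1⁻¹ * ((-P + F * P * Fᴴ) * M2⁻¹) + M1⁻¹ * (F * P) + P * (Fᴴ * M2⁻¹) + P = 0 := by
    rw [h3]
    simp only [Matrix.sub_mul, Matrix.neg_mul, Matrix.mul_sub, Matrix.mul_neg,
      Matrix.mul_assoc, hinv2, Matrix.mul_one,
      Matrix.nonsing_inv_mul_cancel_left _ _ hd1]
    abel
  rw [fromCols_mul_fromBlocks, fromCols_mul_fromRows]
  have expand :
      (H * M1⁻¹ * (-P + F * P * Fᴴ) + H * P * Fᴴ) * (M2⁻¹ * Hᴴ) +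
        (H * M1⁻¹ * (F * P * Hᴴ) + H * P * Hᴴ) * 1
      = H * ((M1⁻¹ * ((-P + F * P * Fᴴ) * M2⁻¹) + M1⁻¹ * (F * P) + P * (Fᴴ * M2⁻¹) + P) * Hᴴ) := by
    simp only [Matrix.add_mul, Matrix.mul_add, Matrix.mul_one, Matrix.mul_assoc]
    abel
  rw [Matrix.one_mul, Matrix.one_mul, expand, key, Matrix.zero_mul, Matrix.mul_zero]
end

section
/- For a square matrix F, a matrix H, and a Hermitian matrix P, and any nonzero z ∈ ℂ with z⁻¹I − F* and zI − F invertible, [H*(z⁻¹I−F*)⁻¹, I] · [[−P + F*PF, F*PH], [H*PF, H*PH]] · [(zI−F)⁻¹H; I] = 0. -/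
open Matrix
set_option maxHeartbeats 800000

theorem stmt_6 {n m : ℕ} (F : Matrix (Fin n) (Fin n) ℂ)
    (H : Matrix (Fin n) (Fin m) ℂ) (P : Matrix (Fin n) (Fin n) ℂ) (hP : Pᴴ = P)
    (z : ℂ) (hz : z ≠ 0)
    (h1 : IsUnit (z • (1 : Matrix (Fin n) (Fin n) ℂ) - F))
    (h2 : IsUnit (z⁻¹ • (1 : Matrix (Fin n) (Fin n) ℂ) - Fᴴ)) :
    Matrix.fromCols (Hᴴ * (z⁻¹ • (1 : Matrix (Fin n) (Fin n) ℂ) - Fᴴ)⁻¹) (1 : Matrix (Fin m) (Fin m) ℂ) *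
        fromBlocks (-P + Fᴴ * P * F) (Fᴴ * P * H) (Hᴴ * P * F) (Hᴴ * P * H) *
        fromRows ((z • (1 : Matrix (Fin n) (Fin n) ℂ) - F)⁻¹ * H) (1 : Matrix (Fin m) (Fin m) ℂ) = (0 : Matrix (Fin m) (Fin m) ℂ) := by
  set S : Matrix (Fin n) (Fin n) ℂ := z⁻¹ • (1 : Matrix (Fin n) (Fin n) ℂ) - Fᴴ with hS
  set T : Matrix (Fin n) (Fin n) ℂ := z • (1 : Matrix (Fin n) (Fin n) ℂ) - F with hT
  have hSS : S⁻¹ * S = 1 := Matrix.nonsing_inv_mul _ ((Matrix.isUnit_iff_isUnit_det _).mp h2)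
  have hTT : T * T⁻¹ = 1 := Matrix.mul_nonsing_inv _ ((Matrix.isUnit_iff_isUnit_det _).mp h1)
  have hzz : (z⁻¹ : ℂ) * z = 1 := inv_mul_cancel₀ hz
  have hinner : (-P + Fᴴ * P * F) + (Fᴴ * P) * T + S * (P * F) + S * P * T = 0 := by
    rw [hS, hT]
    simp only [Matrix.mul_sub, Matrix.sub_mul, Matrix.smul_mul, Matrix.mul_smul,
      Matrix.one_mul, Matrix.mul_one, smul_smul, hzz, mul_inv_cancel₀ hz, one_smul, smul_sub,
      sub_smul, Matrix.mul_assoc]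
    abel
  have key : S⁻¹ * (-P + Fᴴ * P * F) * T⁻¹ + S⁻¹ * (Fᴴ * P) + (P * F) * T⁻¹ + P = 0 := by
    have expand : S⁻¹ * ((-P + Fᴴ * P * F) + (Fᴴ * P) * T + S * (P * F) + S * P * T) * T⁻¹ =
        S⁻¹ * (-P + Fᴴ * P * F) * T⁻¹ + S⁻¹ * (Fᴴ * P) + (P * F) * T⁻¹ + P := by
      simp only [Matrix.mul_add, Matrix.add_mul, Matrix.mul_assoc]
      rw [hTT]
      simp only [Matrix.mul_one]
      rw [← Matrix.mul_assoc S⁻¹ S (P * (F * T⁻¹)), hSS, ← Matrix.mul_assoc S⁻¹ S P, hSS,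
        Matrix.one_mul, Matrix.one_mul]
    rw [← expand, hinner, Matrix.mul_zero, Matrix.zero_mul]
  rw [fromCols_mul_fromBlocks, fromCols_mul_fromRows]
  have final : (Hᴴ * S⁻¹ * (-P + Fᴴ * P * F) + (1 : Matrix (Fin m) (Fin m) ℂ) * (Hᴴ * P * F)) * (T⁻¹ * H) +
      (Hᴴ * S⁻¹ * (Fᴴ * P * H) + (1 : Matrix (Fin m) (Fin m) ℂ) * (Hᴴ * P * H)) * (1 : Matrix (Fin m) (Fin m) ℂ) =
      Hᴴ * ((S⁻¹ * (-P + Fᴴ * P * F) * T⁻¹ + S⁻¹ * (Fᴴ * P) + (P * F) * T⁻¹ + P) * H) := by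
    simp only [Matrix.one_mul, Matrix.mul_one, Matrix.add_mul, Matrix.mul_add, Matrix.mul_assoc]
    abel
  rw [final, key, Matrix.zero_mul, Matrix.mul_zero]
end
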